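/- Let N = 1 and set Θ := c̃₃ψ₁χ₁ − ½c̃₁χ₁² − ½c̃₂ψ₁² ∈ Ω. Then dΘ = 0, but there is no ρ ∈ Ω with Θ = dρ; i.e., Θ is a d-cocycle that is not a d-coboundary. -/

import Mathlib

/-!
D = 3 supersymmetry algebra cohomology.
`R3 N = ℂ[ψ₁,…,ψ_N, χ₁,…,χ_N]`, `Om3 N` is the free module with basis
`{1, c̃₁, c̃₂, c̃₃, c̃₁c̃₂, c̃₁c̃₃, c̃₂c̃₃, c̃₁c̃₂c̃₃}` (components 0,…,7), and
`d3` is the odd superderivation with `dc̃₁ = P`, `dc̃₂ = Q`, `dc̃₃ = S`, `d|_R = 0`.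
-/

open MvPolynomial

noncomputable section

/-- The polynomial ring `ℂ[ψ₁,…,ψ_N, χ₁,…,χ_N]`; `Sum.inl i ↦ ψᵢ`, `Sum.inr i ↦ χᵢ`. -/
abbrev R3 (N : ℕ) : Type := MvPolynomial (Fin N ⊕ Fin N) ℂ

/-- `Ω`: free `R3`-module with basis
`{1, c̃₁, c̃₂, c̃₃, c̃₁c̃₂, c̃₁c̃₃, c̃₂c̃₃, c̃₁c̃₂c̃₃}` (components 0,…,7). -/
abbrev Om3 (N : ℕ) : Type := Fin 8 → R3 N

/-- The ghost `ψᵢ`. -/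
def ψ {N : ℕ} (i : Fin N) : R3 N := X (Sum.inl i)

/-- The ghost `χᵢ`. -/
def χ {N : ℕ} (i : Fin N) : R3 N := X (Sum.inr i)

/-- `P = Σ ψᵢ²`. -/
def PP (N : ℕ) : R3 N := ∑ i, ψ i ^ 2

/-- `Q = Σ χᵢ²`. -/
def QQ (N : ℕ) : R3 N := ∑ i, χ i ^ 2

/-- `S = Σ ψᵢχᵢ`. -/
def SS (N : ℕ) : R3 N := ∑ i, ψ i * χ i

/-- The differential: the unique R-linear odd superderivation with
`dc̃₁ = P`, `dc̃₂ = Q`, `dc̃₃ = S` and `d|_R = 0`, written out in components: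
`d(ω₀ + c̃₁ω₁ + c̃₂ω₂ + c̃₃ω₃ + c̃₁c̃₂ω₄ + c̃₁c̃₃ω₅ + c̃₂c̃₃ω₆ + c̃₁c̃₂c̃₃ω₇)
 = Pω₁ + Qω₂ + Sω₃ + (Pc̃₂ − Qc̃₁)ω₄ + (Pc̃₃ − Sc̃₁)ω₅ + (Qc̃₃ − Sc̃₂)ω₆
   + (Pc̃₂c̃₃ − Qc̃₁c̃₃ + Sc̃₁c̃₂)ω₇`. -/
def d3 {N : ℕ} (ω : Om3 N) : Om3 N :=
  ![PP N * ω 1 + QQ N * ω 2 + SS N * ω 3,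
    -(QQ N * ω 4) - SS N * ω 5,
    PP N * ω 4 - SS N * ω 6,
    PP N * ω 5 + QQ N * ω 6,
    SS N * ω 7,
    -(QQ N * ω 7),
    PP N * ω 7,
    0]

/-- Embedding of `R` into `Ω` (coefficient of the basis element `1`). -/
def ofR3 {N : ℕ} (r : R3 N) : Om3 N := ![r, 0, 0, 0, 0, 0, 0, 0]

/-- `ω ∼ ω'` iff `ω − ω' = dρ` for some `ρ`. -/
def Equiv3 {N : ℕ} (ω ω' : Om3 N) : Prop := ∃ ρ, ω - ω' = d3 ρ

/-- Substitution `ψ ↦ X`, `χ ↦ 0`. -/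
def A1 : R3 1 →ₐ[ℂ] Polynomial ℂ := aeval (Sum.elim (fun _ => Polynomial.X) (fun _ => 0))

/-- Substitution `ψ ↦ 0`, `χ ↦ X`. -/
def B1 : R3 1 →ₐ[ℂ] Polynomial ℂ := aeval (Sum.elim (fun _ => 0) (fun _ => Polynomial.X))

lemma eval0_A1_eq_B1 (p : R3 1) : Polynomial.eval 0 (A1 p) = Polynomial.eval 0 (B1 p) := by
  induction p using MvPolynomial.induction_on with
  | C a => simp [A1, B1]
  | add p q hp hq => simp [map_add, hp, hq]
  | mul_X p s hp => cases s <;> simp [A1, B1, hp]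

lemma halfC : (C (1/2 : ℂ) : R3 1) + C (1/2 : ℂ) = 1 := by
  rw [← map_add, ← map_one C]; norm_num

/-- for `N = 1`, `Θ = c̃₃ψ₁χ₁ − ½c̃₁χ₁² − ½c̃₂ψ₁²` is a `d`-cocycle
that is not a `d`-coboundary. -/
theorem stmt16 :
    d3 (![0, -(C (1/2 : ℂ) * χ 0 ^ 2), -(C (1/2 : ℂ) * ψ 0 ^ 2), ψ 0 * χ 0,
          0, 0, 0, 0] : Om3 1) = 0
    ∧
    ¬ ∃ ρ : Om3 1,
        (![0, -(C (1/2 : ℂ) * χ 0 ^ 2), -(C (1/2 : ℂ) * ψ 0 ^ 2), ψ 0 * χ 0,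
            0, 0, 0, 0] : Om3 1) = d3 ρ := by
  constructor
  · set ω : Om3 1 := ![0, -(C (1/2 : ℂ) * χ 0 ^ 2), -(C (1/2 : ℂ) * ψ 0 ^ 2), ψ 0 * χ 0,
      0, 0, 0, 0] with hω
    have hh : (C (1/2 : ℂ) : R3 1) + C (1/2 : ℂ) = 1 := halfC
    have e1 : ω 1 = -(C (1/2 : ℂ) * χ 0 ^ 2) := rfl
    have e2 : ω 2 = -(C (1/2 : ℂ) * ψ 0 ^ 2) := rfl
    have e3 : ω 3 = ψ 0 * χ 0 := rfl
    have e4 : ω 4 = 0 := rfl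
    have e5 : ω 5 = 0 := rfl
    have e6 : ω 6 = 0 := rfl
    have e7 : ω 7 = 0 := rfl
    funext i
    fin_cases i <;>
      simp only [d3, e1, e2, e3, e4, e5, e6, e7, PP, QQ, SS, Fin.sum_univ_one,
        Matrix.cons_val_zero, Matrix.cons_val_one, Matrix.head_cons, mul_zero,
        zero_mul, neg_zero, add_zero, zero_add, sub_zero, zero_sub, neg_neg,
        Pi.zero_apply, Fin.mk_zero, Fin.mk_one] <;>
      first
        | rfl
        | linear_combination (-(ψ (0 : Fin 1) ^ 2 * χ (0 : Fin 1) ^ 2)) * hh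
  · rintro ⟨ρ, h⟩
    have h1 := congrFun h 1
    have h2 := congrFun h 2
    simp only [d3, PP, QQ, SS, Fin.sum_univ_one, Matrix.cons_val_one, Matrix.head_cons,
      Matrix.cons_val_two, Matrix.tail_cons, Fin.isValue] at h1 h2
    have hAψ : A1 (ψ (0 : Fin 1)) = Polynomial.X := by simp [A1, ψ]
    have hAχ : A1 (χ (0 : Fin 1)) = 0 := by simp [A1, χ]
    have hAC : ∀ a : ℂ, A1 (C a) = Polynomial.C a := fun a => by simp [A1]
    have hBψ : B1 (ψ (0 : Fin 1)) = 0 := by simp [B1, ψ]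
    have hBχ : B1 (χ (0 : Fin 1)) = Polynomial.X := by simp [B1, χ]
    have hBC : ∀ a : ℂ, B1 (C a) = Polynomial.C a := fun a => by simp [B1]
    have hA : A1 (ρ 4) = -Polynomial.C (1/2 : ℂ) := by
      have hh := congrArg A1 h2
      simp only [map_sub, map_neg, map_mul, map_pow, hAψ, hAχ, hAC] at hh
      have h' : Polynomial.X ^ 2 * (A1 (ρ 4) - -Polynomial.C (1/2 : ℂ)) = 0 := by
        rw [mul_sub]; linear_combination -hh
      rcases mul_eq_zero.mp h' with hX | h0
      · exact absurd hX (pow_ne_zero 2 Polynomial.X_ne_zero)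
      · exact sub_eq_zero.mp h0
    have hB : B1 (ρ 4) = Polynomial.C (1/2 : ℂ) := by
      have hh := congrArg B1 h1
      simp only [Matrix.cons_val_zero, map_sub, map_neg, map_mul, map_pow, hBψ, hBχ, hBC] at hh
      have h' : Polynomial.X ^ 2 * (B1 (ρ 4) - Polynomial.C (1/2 : ℂ)) = 0 := by
        rw [mul_sub]; linear_combination hh
      rcases mul_eq_zero.mp h' with hX | h0
      · exact absurd hX (pow_ne_zero 2 Polynomial.X_ne_zero)
      · exact sub_eq_zero.mp h0
    have hfin := eval0_A1_eq_B1 (ρ 4)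
    rw [hA, hB] at hfin
    simp at hfin
    norm_num at hfin
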